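/- Let X be a topos, J ↪ 1 a subterminal object, j : X/J → X the open inclusion with j^* E = E × J → J and right adjoint j_*, and i_* : X_c → X the inclusion of the closed complement (objects E with E × J → J an isomorphism) with left exact left adjoint i^* E = E ⋆ J (the pushout of E ← E × J → J). Then for every object E of X, the square with vertices E, i_* i^* E, j_* j^* E, i_* i^* j_* j^* E formed by the unit maps is a pullback square (local recollement / fracture square). -/

import Mathlib

open CategoryTheory CategoryTheory.Limits CartesianMonoidalCategory MonoidalCategory CartesianClosed

universe v u

noncomputable section

variable {X : Type u} [Category.{v} X] [CartesianMonoidalCategory X] [MonoidalClosed X]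
  [HasPullbacks X] [HasPushouts X] [Adhesive X]

/-- For a subterminal object `J`, the open modality `j_* j^*` is `E ↦ (J ⟹ E)`,
with unit the transpose of the projection `J ⊗ E ⟶ E`. -/
def openUnit (J E : X) : E ⟶ (J ⟹ E) := MonoidalClosed.curry (snd J E)

/-- For a subterminal object `J`, the closed modality `i_* i^*` is the join
`E ⋆ J`, i.e. the pushout of the span `E ← J ⊗ E → J`; its unit is `pushout.inl`. -/
def closedObj (J E : X) : X := pushout (snd J E) (fst J E)

/-- The unit `E ⟶ E ⋆ J` of the closed modality. -/
def closedUnit (J E : X) : E ⟶ closedObj J E := pushout.inl _ _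

/-- Functorial action of the closed modality `E ↦ E ⋆ J` on a morphism. -/
def closedMap (J : X) {E F : X} (φ : E ⟶ F) : closedObj J E ⟶ closedObj J F :=
  pushout.map _ _ _ _ φ (𝟙 J) (J ◁ φ) (by simp) (by simp)

/-- Any two morphisms into a subterminal object agree. -/
lemma subterminal_hom_ext {J : X} (hJ : Mono (toUnit J)) {T : X} (a b : T ⟶ J) : a = b := by
  have : a ≫ toUnit J = b ≫ toUnit J := toUnit_unique _ _
  exact (cancel_mono (toUnit J)).mp this

/-- For subterminal `J`, the projection `J ⊗ A ⟶ A` is a monomorphism. -/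
lemma mono_snd_of_subterminal {J : X} (hJ : Mono (toUnit J)) (A : X) : Mono (snd J A) := by
  constructor
  intro T a b h
  apply CartesianMonoidalCategory.hom_ext
  · exact subterminal_hom_ext hJ _ _
  · exact h

/-- The naturality square of the second projection is always a pullback. -/
lemma isPullback_snd_whiskerLeft (J : X) {A B : X} (f : A ⟶ B) :
    IsPullback (snd J A) (J ◁ f) f (snd J B) := by
  refine IsPullback.of_isLimit (PullbackCone.IsLimit.mk (whiskerLeft_snd J f).symm
    (fun s => lift (s.snd ≫ fst J B) s.fst) ?_ ?_ ?_)
  · intro s; rw [lift_snd]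
  · intro s
    apply CartesianMonoidalCategory.hom_ext
    · simp
    · simp [s.condition]
  · intro s m h1 h2
    apply CartesianMonoidalCategory.hom_ext
    · simpa using congrArg (· ≫ fst J B) h2
    · simpa using h1

/-- For subterminal `J`, whiskering the open unit with `J` is an isomorphism. -/
lemma isIso_whiskerLeft_openUnit {J : X} (hJ : Mono (toUnit J)) (E : X) :
    IsIso (J ◁ openUnit J E) := by
  refine ⟨lift (fst J (J ⟹ E)) ((ihom.ev J).app E), ?_, ?_⟩
  · apply CartesianMonoidalCategory.hom_ext
    · simp
    · simp only [Category.assoc, lift_snd, Category.id_comp, openUnit]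
      rw [← MonoidalClosed.uncurry_eq, MonoidalClosed.uncurry_curry]
  · apply CartesianMonoidalCategory.hom_ext
    · simp
    · simp only [Category.assoc, whiskerLeft_snd, lift_snd, Category.id_comp]
      -- goal: (ihom.ev J).app E ≫ openUnit J E = snd J (J ⟹ E)
      have key : snd J (J ⊗ (J ⟹ E)) = J ◁ snd J (J ⟹ E) := by
        apply CartesianMonoidalCategory.hom_ext
        · exact subterminal_hom_ext hJ _ _
        · simp
      have h1 : MonoidalClosed.uncurry ((ihom.ev J).app E ≫ openUnit J E)
          = MonoidalClosed.uncurry (snd J (J ⟹ E)) := by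
        rw [MonoidalClosed.uncurry_eq, MonoidalClosed.uncurry_eq, MonoidalCategory.whiskerLeft_comp]
        rw [Category.assoc]
        have : (J ◁ openUnit J E) ≫ (ihom.ev J).app E = snd J E := by
          rw [← MonoidalClosed.uncurry_eq]; exact MonoidalClosed.uncurry_curry _
        rw [this, ← key]
        simp
      have := congrArg MonoidalClosed.curry h1
      simpa [MonoidalClosed.curry_uncurry] using this

/-- Local recollement (fracture square): in a topos, for any subterminal object `J`
and any object `E`, the square formed by the units of the open modality
`E ↦ j_* j^* E = (J ⟹ E)` and the closed modality `E ↦ i_* i^* E = E ⋆ J`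
is a pullback:
`E → i_* i^* E`, `E → j_* j^* E`, `i_* i^* E → i_* i^* j_* j^* E`,
`j_* j^* E → i_* i^* j_* j^* E`. -/
theorem fracture_square (J : X) (hJ : Mono (toUnit J)) (E : X) :
    IsPullback (closedUnit J E) (openUnit J E)
      (closedMap J (openUnit J E)) (closedUnit J (J ⟹ E)) := by
  haveI : Mono (snd J (J ⟹ E)) := mono_snd_of_subterminal hJ _
  haveI : IsIso (J ◁ openUnit J E) := isIso_whiskerLeft_openUnit hJ E
  have H : IsPushout (snd J (J ⟹ E)) (fst J (J ⟹ E))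
      (pushout.inl _ _) (pushout.inr _ _) := IsPushout.of_hasPushout _ _
  have vk := Adhesive.van_kampen H
  have pb1 : IsPullback (snd J E) (J ◁ openUnit J E) (openUnit J E) (snd J (J ⟹ E)) :=
    isPullback_snd_whiskerLeft J (openUnit J E)
  have pb2 : IsPullback (fst J E) (J ◁ openUnit J E) (𝟙 J) (fst J (J ⟹ E)) :=
    IsPullback.of_vert_isIso ⟨by simp⟩
  have csq1 : CommSq (closedUnit J E) (openUnit J E)
      (closedMap J (openUnit J E)) (pushout.inl _ _) :=
    ⟨by simp only [closedUnit, closedMap, pushout.map]; exact pushout.inl_desc _ _ _⟩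
  have csq2 : CommSq (pushout.inr (snd J E) (fst J E)) (𝟙 J)
      (closedMap J (openUnit J E)) (pushout.inr _ _) :=
    ⟨by simp only [closedMap, pushout.map]; exact pushout.inr_desc _ _ _⟩
  have csq0 : CommSq (snd J E) (fst J E) (closedUnit J E)
      (pushout.inr (snd J E) (fst J E)) := ⟨pushout.condition⟩
  have := (vk (snd J E) (fst J E) (closedUnit J E) (pushout.inr _ _)
      (J ◁ openUnit J E) (openUnit J E) (𝟙 J) (closedMap J (openUnit J E))
      pb1 pb2 csq1 csq2 csq0).mp (IsPushout.of_hasPushout _ _)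
  exact this.1

end
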